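/- For positive integers α, β and n, the Selberg integral with γ=1, namely ∫_{[0,1]^n} ∏_{i=1}^n x_i^{α−1}(1−x_i)^{β−1} · ∏_{1≤i<j≤n}(x_i−x_j)² dx_1···dx_n, equals ∏_{j=0}^{n−1} (α+j−1)!·(β+j−1)!·(j+1)!/(α+β+n+j−2)!. -/

import Mathlib

open MeasureTheory Polynomial Finset


namespace SelbergAux

/-- Beta integral with natural exponents. -/
noncomputable def J (p q : ℕ) : ℝ := ∫ x in Set.Icc (0:ℝ) 1, x^p * (1-x)^q

lemma J_eval (p q : ℕ) : J p q = (p.factorial * q.factorial : ℝ) / (p+q+1).factorial := by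
  induction q generalizing p with
  | zero =>
      simp only [J, pow_zero, mul_one, Nat.factorial_zero, Nat.cast_one]
      rw [integral_Icc_eq_integral_Ioc, ← intervalIntegral.integral_of_le (by norm_num : (0:ℝ) ≤ 1),
        integral_pow]
      simp [Nat.factorial_succ]
      have hf : (0:ℝ) < p.factorial := by positivity
      field_simp
  | succ q ih =>
      have key : ∀ x : ℝ, x^p * (1-x)^(q+1) = x^p * (1-x)^q - x^(p+1) * (1-x)^q := by
        intro x; ring
      have h1 : J p (q+1) = J p q - J (p+1) q := by
        simp only [J]
        rw [← integral_sub]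
        · congr 1; ext x; exact key x
        · exact (continuous_pow p |>.mul ((continuous_const.sub continuous_id).pow q)).integrableOn_Icc.mono_set (le_refl _) |>.mono_set (le_refl _)
        · exact ((continuous_pow (p+1)).mul ((continuous_const.sub continuous_id).pow q)).integrableOn_Icc
      rw [h1, ih, ih]
      have h2 : ((p + (q+1) + 1).factorial : ℝ) = (p+q+2) * (p+q+1).factorial := by
        have : p + (q+1) + 1 = (p+q+1) + 1 := by ring
        rw [this, Nat.factorial_succ]; push_cast; ring
      have h3 : ((p+1 + q + 1).factorial : ℝ) = (p+q+2) * (p+q+1).factorial := by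
        have : p + 1 + q + 1 = (p+q+1) + 1 := by ring
        rw [this, Nat.factorial_succ]; push_cast; ring
      rw [h2, h3]
      have h4 : ((q+1).factorial : ℝ) = (q+1) * q.factorial := by
        rw [Nat.factorial_succ]; push_cast; ring
      have h5 : ((p+1).factorial : ℝ) = (p+1) * p.factorial := by
        rw [Nat.factorial_succ]; push_cast; ring
      rw [h4, h5]
      have hf1 : (0:ℝ) < (p+q+1).factorial := by positivity
      field_simp
      ring


lemma comp_coeff (P : Polynomial ℝ) (n m : ℕ) (h : P.natDegree < n) :
    (P.comp (X + 1)).coeff m = ∑ i ∈ range n, P.coeff i * (i.choose m : ℝ) := by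
  conv_lhs => rw [P.as_sum_range' n h]
  rw [Polynomial.comp, eval₂_finset_sum]
  rw [finset_sum_coeff]
  refine Finset.sum_congr rfl fun i _ => ?_
  rw [eval₂_monomial, coeff_C_mul, coeff_X_add_one_pow]

/-- Finite differences: alternating binomial sum of polynomial values. -/
lemma FD : ∀ (j : ℕ) (P : Polynomial ℝ), P.natDegree ≤ j →
    ∑ k ∈ range (j+1), (-1:ℝ)^k * (j.choose k : ℝ) * P.eval (k:ℝ)
      = (-1)^j * (j.factorial : ℝ) * P.coeff j := by
  intro j
  induction j with
  | zero =>
      intro P hP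
      obtain ⟨c, rfl⟩ := Polynomial.natDegree_eq_zero.mp (Nat.le_zero.mp hP)
      simp
  | succ j ih =>
      intro P hP
      set Q : Polynomial ℝ := P - P.comp (X + 1) with hQ
      have hdeg : P.natDegree < j + 2 := by omega
      have hcoeffQ : ∀ m, Q.coeff m = P.coeff m - ∑ i ∈ range (j+2), P.coeff i * (i.choose m : ℝ) := by
        intro m
        rw [hQ, coeff_sub, comp_coeff P (j+2) m hdeg]
      have hQj : Q.coeff j = -((j:ℝ)+1) * P.coeff (j+1) := by
        rw [hcoeffQ j]
        rw [Finset.sum_range_succ, Finset.sum_range_succ]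
        have : ∑ i ∈ range j, P.coeff i * (i.choose j : ℝ) = 0 := by
          refine Finset.sum_eq_zero fun i hi => ?_
          rw [Nat.choose_eq_zero_of_lt (mem_range.mp hi)]; simp
        rw [this]
        simp [Nat.choose_succ_self_right]
        ring
      have hQhigh : ∀ m, j < m → Q.coeff m = 0 := by
        intro m hm
        rcases Nat.lt_or_ge m (j+2) with hm2 | hm2
        · have hmj : m = j + 1 := by omega
          subst hmj
          rw [hcoeffQ]
          rw [Finset.sum_range_succ]
          have : ∑ i ∈ range (j+1), P.coeff i * (i.choose (j+1) : ℝ) = 0 := by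
            refine Finset.sum_eq_zero fun i hi => ?_
            have hi' := mem_range.mp hi
            rw [Nat.choose_eq_zero_of_lt (by omega : i < j+1)]; simp
          rw [this]; simp
        · rw [hcoeffQ]
          have h1 : P.coeff m = 0 := coeff_eq_zero_of_natDegree_lt (by omega)
          have : ∑ i ∈ range (j+2), P.coeff i * (i.choose m : ℝ) = 0 := by
            refine Finset.sum_eq_zero fun i hi => ?_
            have hi' := mem_range.mp hi
            rw [Nat.choose_eq_zero_of_lt (by omega : i < m)]; simp
          rw [h1, this]; simp
      have hQdeg : Q.natDegree ≤ j := natDegree_le_iff_coeff_eq_zero.mpr (fun m hm => hQhigh m hm)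
      have hQeval : ∀ k : ℕ, Q.eval (k:ℝ) = P.eval (k:ℝ) - P.eval ((k:ℝ)+1) := by
        intro k; rw [hQ]; simp [eval_comp]
      set f : ℕ → ℝ := fun k => (-1:ℝ)^k * ((j+1).choose k : ℝ) * P.eval (k:ℝ) with hf
      set g : ℕ → ℝ := fun k => (-1:ℝ)^k * (j.choose k : ℝ) * P.eval (k:ℝ) with hg
      have hfg : ∀ k, f (k+1) = g (k+1) - (-1:ℝ)^k * (j.choose k : ℝ) * P.eval ((k:ℝ)+1) := by
        intro k
        rw [hf, hg]
        simp only [Nat.choose_succ_succ j k]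
        push_cast
        ring
      have step : ∑ k ∈ range (j+1+1), f k
          = ∑ k ∈ range (j+1), (-1:ℝ)^k * (j.choose k : ℝ) * Q.eval (k:ℝ) := by
        rw [Finset.sum_range_succ']
        calc (∑ k ∈ range (j+1), f (k+1)) + f 0
            = ((∑ k ∈ range (j+1), g (k+1)) + g 0)
              - ∑ k ∈ range (j+1), (-1:ℝ)^k * (j.choose k : ℝ) * P.eval ((k:ℝ)+1) := by
              simp only [hfg]
              rw [Finset.sum_sub_distrib]
              have : f 0 = g 0 := by rw [hf, hg]; simp
              rw [this]; ring
          _ = (∑ k ∈ range (j+1+1), g k)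
              - ∑ k ∈ range (j+1), (-1:ℝ)^k * (j.choose k : ℝ) * P.eval ((k:ℝ)+1) := by
              rw [← Finset.sum_range_succ']
          _ = (∑ k ∈ range (j+1), g k)
              - ∑ k ∈ range (j+1), (-1:ℝ)^k * (j.choose k : ℝ) * P.eval ((k:ℝ)+1) := by
              rw [Finset.sum_range_succ]
              have : g (j+1) = 0 := by
                rw [hg]; simp [Nat.choose_eq_zero_of_lt (Nat.lt_succ_self j)]
              rw [this, add_zero]
          _ = ∑ k ∈ range (j+1), (-1:ℝ)^k * (j.choose k : ℝ) * Q.eval (k:ℝ) := by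
              rw [← Finset.sum_sub_distrib]
              refine Finset.sum_congr rfl fun k _ => ?_
              rw [hQeval k, hg]; ring
      rw [step, ih Q hQdeg, hQj]
      rw [Nat.factorial_succ]
      push_cast
      ring

lemma R1 (c s : ℕ) : ∏ i ∈ range s, ((c:ℝ)+1+i) = (c+s).factorial / c.factorial := by
  induction s with
  | zero =>
      simp [div_self (Nat.cast_ne_zero.mpr c.factorial_ne_zero : ((c.factorial:ℝ)) ≠ 0)]
  | succ s ih =>
      rw [Finset.prod_range_succ, ih]
      have h1 : (c+(s+1)).factorial = (c+s+1) * (c+s).factorial := by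
        rw [show c+(s+1) = (c+s)+1 from rfl, Nat.factorial_succ]
      rw [h1]
      have hc : (0:ℝ) < c.factorial := by positivity
      push_cast
      field_simp
      ring

/-- the auxiliary polynomial for finite differencing. -/
noncomputable def gP (s t c d : ℕ) : Polynomial ℝ :=
  (∏ i ∈ range s, (Polynomial.C ((c+i : ℕ):ℝ) - X)) * (∏ i ∈ range t, (Polynomial.C ((d+i : ℕ):ℝ) + X))

lemma gP_eq (s t c d : ℕ) : gP s t c d
    = Polynomial.C ((-1:ℝ)^s) * ((∏ i ∈ range s, (X - Polynomial.C ((c+i : ℕ):ℝ)))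
        * (∏ i ∈ range t, (X + Polynomial.C ((d+i : ℕ):ℝ)))) := by
  unfold gP
  have : ∀ i : ℕ, Polynomial.C ((c+i : ℕ):ℝ) - X = (-1) * (X - Polynomial.C ((c+i : ℕ):ℝ)) := by
    intro i; ring
  rw [Finset.prod_congr rfl (fun i _ => this i), Finset.prod_mul_distrib]
  simp only [Finset.prod_const, Finset.card_range]
  have : ∀ i : ℕ, Polynomial.C ((d+i : ℕ):ℝ) + X = X + Polynomial.C ((d+i : ℕ):ℝ) := by
    intro i; ring
  rw [Finset.prod_congr rfl (fun i _ => this i)]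
  rw [map_pow, map_neg, map_one]
  ring

lemma gP_monicPart (s t c d : ℕ) :
    ((∏ i ∈ range s, (X - Polynomial.C ((c+i : ℕ):ℝ)))
        * (∏ i ∈ range t, (X + Polynomial.C ((d+i : ℕ):ℝ)))).Monic ∧
    ((∏ i ∈ range s, (X - Polynomial.C ((c+i : ℕ):ℝ)))
        * (∏ i ∈ range t, (X + Polynomial.C ((d+i : ℕ):ℝ)))).natDegree = s + t := by
  have h1 : (∏ i ∈ range s, (X - Polynomial.C ((c+i : ℕ):ℝ))).Monic :=
    monic_prod_of_monic _ _ (fun i _ => monic_X_sub_C _)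
  have h2 : (∏ i ∈ range t, (X + Polynomial.C ((d+i : ℕ):ℝ))).Monic :=
    monic_prod_of_monic _ _ (fun i _ => monic_X_add_C _)
  refine ⟨h1.mul h2, ?_⟩
  rw [h1.natDegree_mul h2]
  rw [natDegree_prod_of_monic _ _ (fun i _ => monic_X_sub_C _),
    natDegree_prod_of_monic _ _ (fun i _ => monic_X_add_C _)]
  simp only [natDegree_X_sub_C, natDegree_X_add_C, Finset.sum_const, Finset.card_range,
    smul_eq_mul, mul_one]

lemma gP_natDegree_le (s t c d : ℕ) : (gP s t c d).natDegree ≤ s + t := by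
  rw [gP_eq]
  refine le_trans (natDegree_mul_le) ?_
  rw [natDegree_C, (gP_monicPart s t c d).2]
  omega

lemma gP_coeff_top (s t c d : ℕ) : (gP s t c d).coeff (s+t) = (-1:ℝ)^s := by
  rw [gP_eq, coeff_C_mul]
  have h := gP_monicPart s t c d
  have : ((∏ i ∈ range s, (X - Polynomial.C ((c+i : ℕ):ℝ)))
        * (∏ i ∈ range t, (X + Polynomial.C ((d+i : ℕ):ℝ)))).coeff (s+t) = 1 := by
    rw [← h.2]; exact h.1.coeff_natDegree
  rw [this, mul_one]

lemma gP_eval (a b j s t k : ℕ) (hk : k ≤ j) :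
    (gP s t (a+j+1) (b+1)).eval (k:ℝ)
      = ((a+j-k+s).factorial / (a+j-k).factorial : ℝ)
        * ((b+k+t).factorial / (b+k).factorial : ℝ) := by
  unfold gP
  rw [eval_mul, eval_prod, eval_prod]
  simp only [eval_sub, eval_add, eval_C, eval_X]
  have e1 : ∀ i ∈ range s, ((a+j+1+i : ℕ):ℝ) - (k:ℝ) = ((a+j-k : ℕ):ℝ)+1+i := by
    intro i _
    have : (a+j+1+i : ℕ) = (a+j-k) + 1 + i + k := by omega
    rw [this]; push_cast; ring
  have e2 : ∀ i ∈ range t, ((b+1+i : ℕ):ℝ) + (k:ℝ) = ((b+k : ℕ):ℝ)+1+i := by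
    intro i _; push_cast; ring
  rw [Finset.prod_congr rfl e1, Finset.prod_congr rfl e2, R1, R1]

lemma dfr {n k : ℕ} (h : k ≤ n) :
    ((n.descFactorial k : ℕ) : ℝ) = n.factorial / (n-k).factorial := by
  have := Nat.factorial_mul_descFactorial h
  have h2 : ((n-k).factorial : ℝ) * (n.descFactorial k : ℝ) = n.factorial := by
    exact_mod_cast congrArg (Nat.cast : ℕ → ℝ) this
  have hpos : (0:ℝ) < (n-k).factorial := by positivity
  field_simp at h2 ⊢
  linarith [h2]

noncomputable def cc (a b j k : ℕ) : ℝ :=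
  (-1)^(j-k) * (j.choose k) * ((a+j).descFactorial k) * ((b+j).descFactorial (j-k))

lemma KEY (a b j s t : ℕ) (hst : s + t ≤ j) :
    ∑ k ∈ range (j+1), cc a b j k * J ((j-k)+s+a) (k+t+b)
      = if s + t = j
        then (-1:ℝ)^s * j.factorial * (a+j).factorial * (b+j).factorial / (a+b+2*j+1).factorial
        else 0 := by
  set pref : ℝ := ((a+j).factorial * (b+j).factorial / (a+b+j+s+t+1).factorial : ℝ) * (-1:ℝ)^j
    with hpref
  have hterm : ∀ k ∈ range (j+1), cc a b j k * J ((j-k)+s+a) (k+t+b)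
      = pref * ((-1:ℝ)^k * (j.choose k) * (gP s t (a+j+1) (b+1)).eval (k:ℝ)) := by
    intro k hk
    have hkj : k ≤ j := by
      have := mem_range.mp hk; omega
    rw [J_eval, gP_eval a b j s t k hkj]
    unfold cc
    rw [dfr (show k ≤ a+j by omega), dfr (show j-k ≤ b+j by omega)]
    have e1 : (j-k)+s+a = a+j-k+s := by omega
    have e2 : k+t+b = b+k+t := by omega
    have e3 : a+j-k+s + (b+k+t) + 1 = a+b+j+s+t+1 := by omega
    have e4 : b+j-(j-k) = b+k := by omega
    rw [e1, e2, e3, e4]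
    have hsign : (-1:ℝ)^(j-k) = (-1:ℝ)^j * (-1:ℝ)^k := by
      rw [← pow_add]
      have h5 : j + k = (j - k) + 2*k := by omega
      rw [h5, pow_add, pow_mul]
      norm_num
    rw [hpref, hsign]
    have p1 : (0:ℝ) < (a+j-k).factorial := by positivity
    have p2 : (0:ℝ) < (b+k).factorial := by positivity
    have p3 : (0:ℝ) < (a+b+j+s+t+1).factorial := by positivity
    field_simp
  rw [Finset.sum_congr rfl hterm, ← Finset.mul_sum]
  have hdeg : (gP s t (a+j+1) (b+1)).natDegree ≤ j := le_trans (gP_natDegree_le _ _ _ _) hst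
  rw [FD j _ hdeg]
  by_cases hc : s + t = j
  · rw [if_pos hc]
    have : (gP s t (a+j+1) (b+1)).coeff j = (-1:ℝ)^s := by
      rw [← hc]; exact gP_coeff_top _ _ _ _
    rw [this, hpref]
    have : a+b+j+s+t+1 = a+b+2*j+1 := by omega
    rw [this]
    field_simp
    ring_nf
    rw [show j*2 = 2*j by ring, pow_mul]
    norm_num
  · rw [if_neg hc]
    have : (gP s t (a+j+1) (b+1)).coeff j = 0 :=
      coeff_eq_zero_of_natDegree_lt (lt_of_le_of_lt (gP_natDegree_le _ _ _ _) (by omega))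
    rw [this]; ring

/-- ℕ Vandermonde convolution in descFactorial form. -/
lemma VS (a b j : ℕ) :
    ∑ k ∈ range (j+1), j.choose k * ((a+j).descFactorial k * (b+j).descFactorial (j-k))
      = (a+b+2*j).descFactorial j := by
  have h : ∀ k ∈ range (j+1), j.choose k * ((a+j).descFactorial k * (b+j).descFactorial (j-k))
      = j.factorial * ((a+j).choose k * (b+j).choose (j-k)) := by
    intro k hk
    have hkj : k ≤ j := by have := mem_range.mp hk; omega
    rw [Nat.descFactorial_eq_factorial_mul_choose (a+j) k,
      Nat.descFactorial_eq_factorial_mul_choose (b+j) (j-k)]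
    have : j.choose k * (k.factorial * (a+j).choose k * ((j-k).factorial * (b+j).choose (j-k)))
        = (j.choose k * k.factorial * (j-k).factorial) * ((a+j).choose k * (b+j).choose (j-k)) := by
      ring
    rw [this, Nat.choose_mul_factorial_mul_factorial hkj]
  rw [Finset.sum_congr rfl h, ← Finset.mul_sum]
  rw [Nat.descFactorial_eq_factorial_mul_choose (a+b+2*j) j]
  congr 1
  have := Nat.add_choose_eq (a+j) (b+j) j
  rw [show a+j+(b+j) = a+b+2*j by omega] at this
  rw [this, Finset.Nat.sum_antidiagonal_eq_sum_range_succ_mk]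

/-- The (rescaled Jacobi-type) orthogonal polynomials. -/
noncomputable def qp (a b j : ℕ) : Polynomial ℝ :=
  ∑ k ∈ range (j+1), Polynomial.C (cc a b j k) * X^(j-k) * (1-X)^k

lemma qp_eval (a b j : ℕ) (x : ℝ) :
    (qp a b j).eval x = ∑ k ∈ range (j+1), cc a b j k * (x^(j-k) * (1-x)^k) := by
  unfold qp
  rw [eval_finset_sum]
  refine Finset.sum_congr rfl fun k _ => ?_
  simp [mul_assoc]

lemma one_sub_X_natDegree : (1 - X : Polynomial ℝ).natDegree = 1 := by
  have : (1 - X : Polynomial ℝ) = -(X - Polynomial.C 1) := by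
    rw [map_one]; ring
  rw [this, natDegree_neg, natDegree_X_sub_C]

lemma one_sub_X_pow_coeff (k : ℕ) : ((1 - X : Polynomial ℝ)^k).coeff k = (-1)^k := by
  have h1 : (1 - X : Polynomial ℝ) = -(X - Polynomial.C 1) := by
    rw [map_one]; ring
  rw [h1, neg_pow]
  have hm : ((X - Polynomial.C (1:ℝ))^k).Monic := (monic_X_sub_C 1).pow k
  have hd : ((X - Polynomial.C (1:ℝ))^k).natDegree = k := by
    rw [natDegree_pow, natDegree_X_sub_C, mul_one]
  have h2 := hm.coeff_natDegree
  rw [hd] at h2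
  rw [show ((-1 : Polynomial ℝ)) = Polynomial.C (-1) by simp, ← map_pow, coeff_C_mul, h2, mul_one]

lemma qp_natDegree_le (a b j : ℕ) : (qp a b j).natDegree ≤ j := by
  unfold qp
  refine le_trans (natDegree_sum_le _ _) ?_
  rw [Finset.fold_max_le]
  refine ⟨by omega, fun k hk => ?_⟩
  have hkj : k ≤ j := by have := mem_range.mp hk; omega
  refine le_trans (natDegree_mul_le) ?_
  have h1 : (Polynomial.C (cc a b j k) * X^(j-k)).natDegree ≤ j - k := by
    refine le_trans (natDegree_mul_le) ?_
    simp [natDegree_X_pow]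
  have h2 : ((1 - X : Polynomial ℝ)^k).natDegree ≤ k := by
    refine le_trans (natDegree_pow_le) ?_
    rw [one_sub_X_natDegree]; omega
  omega

lemma qp_coeff_top (a b j : ℕ) :
    (qp a b j).coeff j = (-1:ℝ)^j * ((a+b+2*j).descFactorial j : ℕ) := by
  unfold qp
  rw [finset_sum_coeff]
  have h : ∀ k ∈ range (j+1), (Polynomial.C (cc a b j k) * X^(j-k) * (1-X)^k).coeff j
      = cc a b j k * (-1)^k := by
    intro k hk
    have hkj : k ≤ j := by have := mem_range.mp hk; omega
    rw [mul_assoc, coeff_C_mul]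
    have hcm := coeff_X_pow_mul (((1:Polynomial ℝ) - X)^k) (j-k) k
    rw [show k + (j-k) = j by omega] at hcm
    rw [hcm, one_sub_X_pow_coeff]
  rw [Finset.sum_congr rfl h]
  have h2 : ∀ k ∈ range (j+1), cc a b j k * (-1:ℝ)^k
      = (-1:ℝ)^j * (j.choose k * ((a+j).descFactorial k * (b+j).descFactorial (j-k)) : ℕ) := by
    intro k hk
    have hkj : k ≤ j := by have := mem_range.mp hk; omega
    unfold cc
    have hsign : (-1:ℝ)^(j-k) * (-1:ℝ)^k = (-1:ℝ)^j := by
      rw [← pow_add, show j-k+k = j by omega]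
    push_cast
    calc (-1:ℝ)^(j-k) * (j.choose k) * ((a+j).descFactorial k) * ((b+j).descFactorial (j-k)) * (-1)^k
        = ((-1:ℝ)^(j-k) * (-1)^k) * ((j.choose k) * (((a+j).descFactorial k) * ((b+j).descFactorial (j-k)))) := by ring
      _ = (-1:ℝ)^j * ((j.choose k) * (((a+j).descFactorial k) * ((b+j).descFactorial (j-k)))) := by rw [hsign]
  rw [Finset.sum_congr rfl h2, ← Finset.mul_sum]
  congr 1
  push_cast [← VS a b j]
  norm_num

/-- Weighted inner product of two q-polynomials. -/
noncomputable def G (a b i j : ℕ) : ℝ :=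
  ∫ x in Set.Icc (0:ℝ) 1, (qp a b i).eval x * (qp a b j).eval x * (x^a * (1-x)^b)

lemma G_symm (a b i j : ℕ) : G a b i j = G a b j i := by
  unfold G
  congr 1
  ext x
  ring

lemma G_expand (a b i j : ℕ) : G a b i j
    = ∑ k ∈ range (i+1), cc a b i k *
        ∑ l ∈ range (j+1), cc a b j l * J ((j-l)+(i-k)+a) (l+k+b) := by
  unfold G
  have hpt : ∀ x : ℝ, (qp a b i).eval x * (qp a b j).eval x * (x^a * (1-x)^b)
      = ∑ k ∈ range (i+1), ∑ l ∈ range (j+1),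
          cc a b i k * (cc a b j l * (x^((j-l)+(i-k)+a) * (1-x)^(l+k+b))) := by
    intro x
    rw [qp_eval, qp_eval, Finset.sum_mul_sum, Finset.sum_mul]
    refine Finset.sum_congr rfl fun k _ => ?_
    rw [Finset.sum_mul]
    refine Finset.sum_congr rfl fun l _ => ?_
    simp only [pow_add]
    ring
  simp only [hpt]
  have hint : ∀ (p q : ℕ), IntegrableOn (fun x : ℝ => x^p * (1-x)^q) (Set.Icc (0:ℝ) 1) volume :=
    fun p q => ((continuous_pow p).mul ((continuous_const.sub continuous_id).pow q)).integrableOn_Icc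
  have hint2 : ∀ (c c' : ℝ) (p q : ℕ),
      IntegrableOn (fun x : ℝ => c * (c' * (x^p * (1-x)^q))) (Set.Icc (0:ℝ) 1) volume := by
    intro c c' p q
    exact ((hint p q).const_mul c').const_mul c
  rw [integral_finset_sum _ (fun k _ => integrable_finset_sum _ (fun l _ => hint2 _ _ _ _))]
  refine Finset.sum_congr rfl fun k _ => ?_
  rw [integral_finset_sum _ (fun l _ => hint2 _ _ _ _), Finset.mul_sum]
  refine Finset.sum_congr rfl fun l _ => ?_
  rw [MeasureTheory.integral_const_mul, MeasureTheory.integral_const_mul]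
  rfl

lemma G_lt (a b i j : ℕ) (hij : i < j) : G a b i j = 0 := by
  rw [G_expand]
  refine Finset.sum_eq_zero fun k hk => ?_
  have hki : k ≤ i := by have := mem_range.mp hk; omega
  rw [KEY a b j (i-k) k (by omega), if_neg (by omega)]
  ring

lemma G_diag (a b j : ℕ) : G a b j j
    = ((a+b+2*j).descFactorial j : ℝ)
        * (j.factorial * ((a+j).factorial * (b+j).factorial)) / (a+b+2*j+1).factorial := by
  rw [G_expand]
  have h : ∀ k ∈ range (j+1),
      cc a b j k * ∑ l ∈ range (j+1), cc a b j l * J ((j-l)+(j-k)+a) (l+k+b)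
      = ((j.choose k * ((a+j).descFactorial k * (b+j).descFactorial (j-k)) : ℕ) : ℝ)
          * ((j.factorial * ((a+j).factorial * (b+j).factorial)) / (a+b+2*j+1).factorial) := by
    intro k hk
    have hkj : k ≤ j := by have := mem_range.mp hk; omega
    rw [KEY a b j (j-k) k (by omega), if_pos (by omega)]
    unfold cc
    have hs2 : (-1:ℝ)^(j-k) * (-1:ℝ)^(j-k) = 1 := by
      rw [← pow_add, ← two_mul, pow_mul]; norm_num
    have e : ((-1:ℝ)^(j-k) * (j.choose k) * ((a+j).descFactorial k) * ((b+j).descFactorial (j-k)))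
          * ((-1:ℝ)^(j-k) * j.factorial * (a+j).factorial * (b+j).factorial
              / (a+b+2*j+1).factorial)
        = ((-1:ℝ)^(j-k) * (-1:ℝ)^(j-k))
            * (((j.choose k : ℝ) * ((a+j).descFactorial k) * ((b+j).descFactorial (j-k)))
              * ((j.factorial : ℝ) * (a+j).factorial * (b+j).factorial
                  / (a+b+2*j+1).factorial)) := by
      ring
    rw [e, hs2, one_mul]
    push_cast
    ring
  rw [Finset.sum_congr rfl h, ← Finset.sum_mul, ← Nat.cast_sum, VS a b j]
  ring

lemma G_ne (a b : ℕ) {u v : ℕ} (h : u ≠ v) : G a b u v = 0 := by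
  rcases Nat.lt_or_ge u v with h1 | h1
  · exact G_lt a b u v h1
  · rw [G_symm]; exact G_lt a b v u (by omega)

lemma prod_box_integral {n : ℕ} (f : Fin n → ℝ → ℝ) (hf : ∀ i, Continuous (f i)) :
    ∫ x : Fin n → ℝ in Set.univ.pi (fun _ => Set.Icc (0:ℝ) 1), ∏ i, f i (x i)
      = ∏ i, ∫ y in Set.Icc (0:ℝ) 1, f i y := by
  rw [← integral_indicator (MeasurableSet.univ_pi fun _ => measurableSet_Icc)]
  have hind : (Set.univ.pi fun _ : Fin n => Set.Icc (0:ℝ) 1).indicator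
        (fun x : Fin n → ℝ => ∏ i, f i (x i))
      = fun x : Fin n → ℝ => ∏ i, (Set.Icc (0:ℝ) 1).indicator (f i) (x i) := by
    funext x
    by_cases hx : x ∈ Set.univ.pi fun _ : Fin n => Set.Icc (0:ℝ) 1
    · rw [Set.indicator_of_mem hx]
      refine Finset.prod_congr rfl fun i _ => ?_
      rw [Set.indicator_of_mem (hx i (Set.mem_univ i))]
    · rw [Set.indicator_of_notMem hx]
      obtain ⟨i, hi⟩ : ∃ i, x i ∉ Set.Icc (0:ℝ) 1 := by
        by_contra hcon
        push_neg at hcon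
        exact hx (fun i _ => hcon i)
      exact (Finset.prod_eq_zero (Finset.mem_univ i) (Set.indicator_of_notMem hi _)).symm
  rw [hind]
  rw [MeasureTheory.integral_fintype_prod_volume_eq_prod
    (fun i => (Set.Icc (0:ℝ) 1).indicator (f i))]
  exact Finset.prod_congr rfl fun i _ => integral_indicator measurableSet_Icc

lemma detM (a b n : ℕ) (x : Fin n → ℝ) :
    (Matrix.of fun i k : Fin n => (qp a b (k:ℕ)).eval (x i)).det
      = (∏ k : Fin n, (qp a b (k:ℕ)).coeff (k:ℕ)) * (Matrix.vandermonde x).det := by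
  have hM : (Matrix.of fun i k : Fin n => (qp a b (k:ℕ)).eval (x i))
      = Matrix.vandermonde x * (Matrix.of fun j k : Fin n => (qp a b (k:ℕ)).coeff (j:ℕ)) := by
    ext i k
    rw [Matrix.mul_apply]
    simp only [Matrix.vandermonde, Matrix.of_apply]
    rw [eval_eq_sum_range' (lt_of_le_of_lt (qp_natDegree_le a b (k:ℕ)) k.isLt)]
    rw [Finset.sum_range fun j => (qp a b (k:ℕ)).coeff j * x i ^ j]
    refine Finset.sum_congr rfl fun j _ => ?_
    ring
  rw [hM, Matrix.det_mul, mul_comm]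
  congr 1
  rw [Matrix.det_of_upperTriangular ?ht]
  · rfl
  case ht =>
    intro i j hij
    simp only [Matrix.of_apply]
    exact coeff_eq_zero_of_natDegree_lt
      (lt_of_le_of_lt (qp_natDegree_le a b (j:ℕ)) hij)

lemma sq_vandermonde {n : ℕ} (x : Fin n → ℝ) :
    (Matrix.vandermonde x).det^2 = ∏ i : Fin n, ∏ j ∈ Finset.Ioi i, (x i - x j)^2 := by
  rw [Matrix.det_vandermonde, ← Finset.prod_pow]
  refine Finset.prod_congr rfl fun i _ => ?_
  rw [← Finset.prod_pow]
  refine Finset.prod_congr rfl fun j _ => ?_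
  ring

lemma main_integral (a b n : ℕ) :
    ((∏ k : Fin n, (qp a b (k:ℕ)).coeff (k:ℕ))^2) *
      ∫ x : Fin n → ℝ in Set.univ.pi (fun _ => Set.Icc (0:ℝ) 1),
        (∏ i, (x i)^a * (1 - x i)^b) * ∏ i : Fin n, ∏ j ∈ Finset.Ioi i, (x i - x j)^2
    = (n.factorial : ℝ) * ∏ i : Fin n, G a b (i:ℕ) (i:ℕ) := by
  classical
  set cp := ∏ k : Fin n, (qp a b (k:ℕ)).coeff (k:ℕ) with hcp
  set F : Equiv.Perm (Fin n) → Equiv.Perm (Fin n) → Fin n → ℝ → ℝ :=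
    fun σ τ i y => (qp a b ((σ⁻¹ i : Fin n):ℕ)).eval y * (qp a b ((τ⁻¹ i : Fin n):ℕ)).eval y
      * (y^a * (1 - y)^b) with hF
  have hFcont : ∀ σ τ i, Continuous (F σ τ i) := by
    intro σ τ i
    exact (((qp a b _).continuous).mul ((qp a b _).continuous)).mul
      ((continuous_pow a).mul ((continuous_const.sub continuous_id).pow b))
  have hpt : ∀ x : Fin n → ℝ,
      cp^2 * ((∏ i, (x i)^a * (1 - x i)^b) * ∏ i : Fin n, ∏ j ∈ Finset.Ioi i, (x i - x j)^2)
      = ∑ σ : Equiv.Perm (Fin n), ∑ τ : Equiv.Perm (Fin n),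
          (((Equiv.Perm.sign σ : ℤ) : ℝ) * ((Equiv.Perm.sign τ : ℤ) : ℝ)) *
            ∏ i : Fin n, F σ τ i (x i) := by
    intro x
    have hdet : (Matrix.of fun i k : Fin n => (qp a b (k:ℕ)).eval (x i)).det
        = ∑ σ : Equiv.Perm (Fin n), ((Equiv.Perm.sign σ : ℤ) : ℝ)
            * ∏ i : Fin n, (qp a b ((σ⁻¹ i : Fin n):ℕ)).eval (x i) := by
      rw [Matrix.det_apply']
      refine Finset.sum_congr rfl fun σ _ => ?_
      congr 1
      rw [← Equiv.prod_comp σ (fun m => (qp a b ((σ⁻¹ m : Fin n):ℕ)).eval (x m))]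
      refine Finset.prod_congr rfl fun i _ => ?_
      simp
    have h1 : cp^2 * ((∏ i, (x i)^a * (1 - x i)^b)
          * ∏ i : Fin n, ∏ j ∈ Finset.Ioi i, (x i - x j)^2)
        = ((Matrix.of fun i k : Fin n => (qp a b (k:ℕ)).eval (x i)).det)^2
            * (∏ i, (x i)^a * (1 - x i)^b) := by
      rw [detM a b n x, mul_pow, sq_vandermonde]
      ring
    rw [h1, hdet, pow_two, Finset.sum_mul_sum, Finset.sum_mul]
    refine Finset.sum_congr rfl fun σ _ => ?_
    rw [Finset.sum_mul]
    refine Finset.sum_congr rfl fun τ _ => ?_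
    simp only [hF, Finset.prod_mul_distrib]
    ring
  have hIcompact : IsCompact (Set.univ.pi (fun _ : Fin n => Set.Icc (0:ℝ) 1)) :=
    isCompact_univ_pi fun _ => isCompact_Icc
  have hint : ∀ (σ τ : Equiv.Perm (Fin n)), IntegrableOn
      (fun x : Fin n → ℝ => (((Equiv.Perm.sign σ : ℤ) : ℝ) * ((Equiv.Perm.sign τ : ℤ) : ℝ)) *
        ∏ i : Fin n, F σ τ i (x i))
      (Set.univ.pi (fun _ : Fin n => Set.Icc (0:ℝ) 1)) volume := by
    intro σ τ
    refine ContinuousOn.integrableOn_compact hIcompact ?_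
    refine Continuous.continuousOn ?_
    exact continuous_const.mul (continuous_finset_prod _ fun i _ =>
      (hFcont σ τ i).comp (continuous_apply i))
  calc cp^2 * ∫ x : Fin n → ℝ in Set.univ.pi (fun _ => Set.Icc (0:ℝ) 1),
        (∏ i, (x i)^a * (1 - x i)^b) * ∏ i : Fin n, ∏ j ∈ Finset.Ioi i, (x i - x j)^2
      = ∫ x : Fin n → ℝ in Set.univ.pi (fun _ => Set.Icc (0:ℝ) 1),
          cp^2 * ((∏ i, (x i)^a * (1 - x i)^b)
            * ∏ i : Fin n, ∏ j ∈ Finset.Ioi i, (x i - x j)^2) :=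
        (MeasureTheory.integral_const_mul _ _).symm
    _ = ∫ x : Fin n → ℝ in Set.univ.pi (fun _ => Set.Icc (0:ℝ) 1),
          ∑ σ : Equiv.Perm (Fin n), ∑ τ : Equiv.Perm (Fin n),
            (((Equiv.Perm.sign σ : ℤ) : ℝ) * ((Equiv.Perm.sign τ : ℤ) : ℝ)) *
              ∏ i : Fin n, F σ τ i (x i) := by
        simp only [hpt]
    _ = ∑ σ : Equiv.Perm (Fin n), ∑ τ : Equiv.Perm (Fin n),
          (((Equiv.Perm.sign σ : ℤ) : ℝ) * ((Equiv.Perm.sign τ : ℤ) : ℝ)) *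
            ∏ i : Fin n, G a b ((σ⁻¹ i : Fin n):ℕ) ((τ⁻¹ i : Fin n):ℕ) := by
        rw [integral_finset_sum _ (fun σ _ => integrable_finset_sum _ (fun τ _ => hint σ τ))]
        refine Finset.sum_congr rfl fun σ _ => ?_
        rw [integral_finset_sum _ (fun τ _ => hint σ τ)]
        refine Finset.sum_congr rfl fun τ _ => ?_
        rw [MeasureTheory.integral_const_mul, prod_box_integral _ (hFcont σ τ)]
        rfl
    _ = ∑ σ : Equiv.Perm (Fin n), ∏ i : Fin n, G a b (i:ℕ) (i:ℕ) := by
        refine Finset.sum_congr rfl fun σ _ => ?_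
        rw [Finset.sum_eq_single_of_mem σ (Finset.mem_univ σ)]
        · have hsgn : ((Equiv.Perm.sign σ : ℤ) : ℝ) * ((Equiv.Perm.sign σ : ℤ) : ℝ) = 1 := by
            have h : (Equiv.Perm.sign σ : ℤ) * (Equiv.Perm.sign σ : ℤ) = 1 := by
              rw [← Units.val_mul, Int.units_mul_self]; rfl
            exact_mod_cast congrArg (Int.cast : ℤ → ℝ) h
          rw [hsgn, one_mul]
          exact Equiv.prod_comp σ⁻¹ (fun i : Fin n => G a b (i:ℕ) (i:ℕ))
        · intro τ _ hτ
          have : ∃ i : Fin n, σ⁻¹ i ≠ τ⁻¹ i := by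
            by_contra hcon
            push_neg at hcon
            exact hτ (inv_injective (Equiv.ext hcon)).symm
          obtain ⟨i, hi⟩ := this
          rw [Finset.prod_eq_zero (Finset.mem_univ i)
            (G_ne a b (fun h => hi (Fin.val_injective h))), mul_zero]
    _ = (n.factorial : ℝ) * ∏ i : Fin n, G a b (i:ℕ) (i:ℕ) := by
        rw [Finset.sum_const, Finset.card_univ, Fintype.card_perm, Fintype.card_fin,
          nsmul_eq_mul]

lemma fact_prod (n : ℕ) :
    n.factorial * ∏ j ∈ range n, j.factorial = ∏ j ∈ range n, (j+1).factorial := by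
  induction n with
  | zero => simp
  | succ n ih =>
      rw [Finset.prod_range_succ, Finset.prod_range_succ, ← ih, Nat.factorial_succ]
      ring

lemma prodId (m n : ℕ) :
    (∏ j ∈ range n, (m+j).factorial) * (∏ j ∈ range n, (m+n+j).factorial)
      = ∏ j ∈ range n, ((m+2*j).factorial * (m+2*j+1).factorial) := by
  induction n with
  | zero => simp
  | succ n ih =>
      have hQ : ∏ j ∈ range (n+1), (m+(n+1)+j).factorial
          = (∏ j ∈ range n, (m+n+(j+1)).factorial) * (m+2*n+1).factorial := by
        rw [Finset.prod_range_succ]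
        congr 1
        · exact Finset.prod_congr rfl fun j _ => by congr 1; omega
        · congr 1; omega
      have hP : (m+n).factorial * ∏ j ∈ range n, (m+n+(j+1)).factorial
          = (∏ j ∈ range n, (m+n+j).factorial) * (m+2*n).factorial := by
        have h1 : ∏ j ∈ range (n+1), (m+n+j).factorial
            = (∏ j ∈ range n, (m+n+(j+1)).factorial) * (m+n).factorial := by
          rw [Finset.prod_range_succ']
          simp
        have h2 : ∏ j ∈ range (n+1), (m+n+j).factorial
            = (∏ j ∈ range n, (m+n+j).factorial) * (m+2*n).factorial := by
          rw [Finset.prod_range_succ]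
          congr 2
          omega
        rw [← h2, h1]
        ring
      rw [hQ, Finset.prod_range_succ, Finset.prod_range_succ]
      calc (∏ j ∈ range n, (m+j).factorial) * (m+n).factorial
            * ((∏ j ∈ range n, (m+n+(j+1)).factorial) * (m+2*n+1).factorial)
          = (∏ j ∈ range n, (m+j).factorial)
              * ((m+n).factorial * ∏ j ∈ range n, (m+n+(j+1)).factorial)
              * (m+2*n+1).factorial := by ring
        _ = (∏ j ∈ range n, (m+j).factorial)
              * ((∏ j ∈ range n, (m+n+j).factorial) * (m+2*n).factorial)
              * (m+2*n+1).factorial := by rw [hP]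
        _ = (∏ j ∈ range n, (m+j).factorial) * (∏ j ∈ range n, (m+n+j).factorial)
              * ((m+2*n).factorial * (m+2*n+1).factorial) := by ring
        _ = (∏ j ∈ range n, ((m+2*j).factorial * (m+2*j+1).factorial))
              * ((m+2*n).factorial * (m+2*n+1).factorial) := by rw [ih]

lemma final_algebra (a b n : ℕ) :
    (∏ j ∈ range n, ((-1:ℝ)^j * ((a+b+2*j).descFactorial j : ℕ)))^2
      * ∏ j ∈ range n, (((a+j).factorial : ℝ) * ((b+j).factorial : ℝ) * ((j+1).factorial : ℝ)
          / ((a+b+n+j).factorial : ℝ))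
    = (n.factorial : ℝ) * ∏ j ∈ range n,
        (((a+b+2*j).descFactorial j : ℝ)
          * ((j.factorial : ℝ) * (((a+j).factorial : ℝ) * ((b+j).factorial : ℝ)))
          / ((a+b+2*j+1).factorial : ℝ)) := by
  have hdf : ∀ j : ℕ, ((a+b+2*j).descFactorial j : ℝ)
      = ((a+b+2*j).factorial : ℝ) / ((a+b+j).factorial : ℝ) := by
    intro j
    rw [dfr (by omega : j ≤ a+b+2*j), show a+b+2*j-j = a+b+j by omega]
  have hsq : (∏ j ∈ range n, ((-1:ℝ)^j * ((a+b+2*j).descFactorial j : ℕ)))^2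
      = ∏ j ∈ range n, (((a+b+2*j).factorial : ℝ) / ((a+b+j).factorial : ℝ))^2 := by
    rw [← Finset.prod_pow]
    refine Finset.prod_congr rfl fun j _ => ?_
    rw [mul_pow, ← pow_mul, show j*2 = 2*j by ring, pow_mul, hdf j]
    norm_num
  rw [hsq]
  simp only [hdf, div_pow, Finset.prod_div_distrib, Finset.prod_mul_distrib, Finset.prod_pow]
  have hJ : (∏ j ∈ range n, ((j+1).factorial : ℝ))
      = (n.factorial : ℝ) * ∏ j ∈ range n, (j.factorial : ℝ) := by
    exact_mod_cast congrArg (Nat.cast : ℕ → ℝ) (fact_prod n).symm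
  have hN : (∏ j ∈ range n, ((a+b+j).factorial:ℝ)) * (∏ j ∈ range n, ((a+b+n+j).factorial:ℝ))
      = (∏ j ∈ range n, ((a+b+2*j).factorial:ℝ)) * (∏ j ∈ range n, ((a+b+2*j+1).factorial:ℝ)) := by
    have := prodId (a+b) n
    rw [Finset.prod_mul_distrib] at this
    exact_mod_cast congrArg (Nat.cast : ℕ → ℝ) this
  have p1 : (∏ j ∈ range n, ((a+b+j).factorial:ℝ)) ≠ 0 :=
    ne_of_gt (Finset.prod_pos fun j _ => by positivity)
  have p2 : (∏ j ∈ range n, ((a+b+n+j).factorial:ℝ)) ≠ 0 :=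
    ne_of_gt (Finset.prod_pos fun j _ => by positivity)
  have p3 : (∏ j ∈ range n, ((a+b+2*j+1).factorial:ℝ)) ≠ 0 :=
    ne_of_gt (Finset.prod_pos fun j _ => by positivity)
  field_simp
  linear_combination ((∏ j ∈ range n, ((a+b+2*j).factorial:ℝ)) * (∏ j ∈ range n, ((a+b+2*j+1).factorial:ℝ))) * hJ - ((n.factorial:ℝ) * (∏ j ∈ range n, (j.factorial:ℝ))) * hN

end SelbergAux

open MeasureTheory

theorem selberg_integral_gamma_one (α β n : ℕ) (hα : 0 < α) (hβ : 0 < β) (hn : 0 < n) :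
    ∫ x : Fin n → ℝ in Set.univ.pi (fun _ => Set.Icc (0 : ℝ) 1),
        (∏ i, x i ^ (α - 1) * (1 - x i) ^ (β - 1)) *
          ∏ i : Fin n, ∏ j ∈ Finset.Ioi i, (x i - x j) ^ 2 =
    ∏ j ∈ Finset.range n,
      ((α + j - 1).factorial : ℝ) * ((β + j - 1).factorial : ℝ) * ((j + 1).factorial : ℝ) /
        ((α + β + n + j - 2).factorial : ℝ) := by
  obtain ⟨a, rfl⟩ : ∃ a, α = a+1 := ⟨α-1, by omega⟩
  obtain ⟨b, rfl⟩ : ∃ b, β = b+1 := ⟨β-1, by omega⟩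
  have hRHS : ∏ j ∈ Finset.range n,
        ((a+1+j-1).factorial : ℝ) * ((b+1+j-1).factorial : ℝ) * ((j+1).factorial : ℝ) /
          ((a+1+(b+1)+n+j-2).factorial : ℝ)
      = ∏ j ∈ Finset.range n,
          ((a+j).factorial : ℝ) * ((b+j).factorial : ℝ) * ((j+1).factorial : ℝ) /
            ((a+b+n+j).factorial : ℝ) := by
    refine Finset.prod_congr rfl fun j _ => ?_
    rw [show a+1+j-1 = a+j by omega, show b+1+j-1 = b+j by omega,
      show a+1+(b+1)+n+j-2 = a+b+n+j by omega]
  rw [hRHS]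
  simp only [Nat.add_sub_cancel]
  have hmain := SelbergAux.main_integral a b n
  have hGd : (∏ i : Fin n, SelbergAux.G a b (i:ℕ) (i:ℕ))
      = ∏ j ∈ Finset.range n, (((a+b+2*j).descFactorial j : ℝ)
          * ((j.factorial:ℝ) * (((a+j).factorial:ℝ) * ((b+j).factorial:ℝ)))
          / ((a+b+2*j+1).factorial:ℝ)) := by
    rw [Fin.prod_univ_eq_prod_range (fun j => SelbergAux.G a b j j)]
    exact Finset.prod_congr rfl fun j _ => SelbergAux.G_diag a b j
  have hcp : (∏ k : Fin n, (SelbergAux.qp a b (k:ℕ)).coeff (k:ℕ))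
      = ∏ j ∈ Finset.range n, ((-1:ℝ)^j * ((a+b+2*j).descFactorial j : ℕ)) := by
    rw [Fin.prod_univ_eq_prod_range (fun k => (SelbergAux.qp a b k).coeff k)]
    exact Finset.prod_congr rfl fun j _ => SelbergAux.qp_coeff_top a b j
  rw [hGd, hcp] at hmain
  have hcpne : (∏ j ∈ Finset.range n, ((-1:ℝ)^j * ((a+b+2*j).descFactorial j : ℕ)))^2 ≠ 0 := by
    apply pow_ne_zero
    apply Finset.prod_ne_zero_iff.mpr
    intro j _
    apply mul_ne_zero (pow_ne_zero _ (by norm_num))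
    have : (a+b+2*j).descFactorial j ≠ 0 := by
      rw [Ne, Nat.descFactorial_eq_zero_iff_lt]
      omega
    exact_mod_cast Nat.cast_ne_zero.mpr this
  apply mul_left_cancel₀ hcpne
  rw [hmain]
  exact (SelbergAux.final_algebra a b n).symm
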